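/- Let M be a map with flag set F and generators s0, s1, s2, and let r0, r1, r2 be the truncation generators on F × {0,1,2}. Then the number of orbits of ⟨r0, r2⟩ on F × {0,1,2} equals three times the number of orbits of ⟨s0, s2⟩ on F; that is, the truncated map Tr(M) has exactly 3|E(M)| edges, where |E(M)| is the number of edges of M. -/
import Mathlib

open MulAction

private lemma orbit_closure_eq' {α : Type*} (T : Set (Equiv.Perm α)) (x : α)
    (S : Set α) (hx : x ∈ S)
    (hinv : ∀ g ∈ T, ∀ y, g y ∈ S ↔ y ∈ S)
    (hsub : ∀ y ∈ S, ∃ g ∈ Subgroup.closure T, g x = y) :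
    MulAction.orbit (↥(Subgroup.closure T)) x = S := by
  apply le_antisymm
  · rintro y ⟨⟨g, hg⟩, rfl⟩
    have key : ∀ g ∈ Subgroup.closure T, ∀ y, g y ∈ S ↔ y ∈ S := by
      intro g hg
      induction hg using Subgroup.closure_induction with
      | mem g hgT => exact hinv g hgT
      | one => simp
      | mul a b _ _ ha hb => intro y; rw [Equiv.Perm.mul_apply, ha, hb]
      | inv a _ ha => intro y; simpa using (ha (a⁻¹ y)).symm
    have : (g : Equiv.Perm α) x ∈ S := (key g hg x).mpr hx
    simpa using this
  · rintro y hy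
    obtain ⟨g, hg, rfl⟩ := hsub y hy
    exact ⟨⟨g, hg⟩, rfl⟩

private lemma invol_iff' {α : Type*} (g : Equiv.Perm α) (hg : ∀ y, g (g y) = y)
    (S : Set α) (hfwd : ∀ y ∈ S, g y ∈ S) : ∀ y, g y ∈ S ↔ y ∈ S :=
  fun y => ⟨fun h => by have := hfwd _ h; rwa [hg] at this, fun h => hfwd y h⟩

private lemma card_eq_four_mul' {α : Type*} [Fintype α] (G : Type*) [Group G] [MulAction G α]
    (h : ∀ a : α, Nat.card (MulAction.orbit G a) = 4) :
    Fintype.card α = 4 * Nat.card (MulAction.orbitRel.Quotient G α) := by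
  classical
  letI : Fintype (MulAction.orbitRel.Quotient G α) := Fintype.ofFinite _
  letI : ∀ ω : MulAction.orbitRel.Quotient G α, Fintype (orbit G ω.out) :=
    fun ω => Fintype.ofFinite _
  rw [Fintype.card_congr (selfEquivSigmaOrbits G α), Fintype.card_sigma]
  rw [Nat.card_eq_fintype_card]
  rw [Finset.sum_congr rfl (fun ω _ => by
    rw [← Nat.card_eq_fintype_card (α := orbit G (ω.out)), h])]
  simp [Finset.sum_const, mul_comm]

theorem truncation_edge_count
    {F : Type*} [Fintype F] [Nonempty F]
    (s0 s1 s2 : Equiv.Perm F)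
    (hs0i : s0 * s0 = 1) (hs0f : ∀ x, s0 x ≠ x)
    (hs1i : s1 * s1 = 1) (hs1f : ∀ x, s1 x ≠ x)
    (hs2i : s2 * s2 = 1) (hs2f : ∀ x, s2 x ≠ x)
    (hcomm : s0 * s2 = s2 * s0)
    (hs02i : (s0 * s2) * (s0 * s2) = 1) (hs02f : ∀ x, (s0 * s2) x ≠ x)
    (htrans : ∀ x y : F, ∃ g ∈ Subgroup.closure ({s0, s1, s2} : Set (Equiv.Perm F)), g x = y)
    (r0 r1 r2 : Equiv.Perm (F × Fin 3))
    (hr0 : ∀ Φ : F, r0 (Φ, 0) = (s1 Φ, 0) ∧ r0 (Φ, 1) = (s0 Φ, 1) ∧ r0 (Φ, 2) = (s1 Φ, 2))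
    (hr1 : ∀ Φ : F, r1 (Φ, 0) = (s2 Φ, 0) ∧ r1 (Φ, 1) = (Φ, 2) ∧ r1 (Φ, 2) = (Φ, 1))
    (hr2 : ∀ Φ : F, r2 (Φ, 0) = (Φ, 2) ∧ r2 (Φ, 1) = (s2 Φ, 1) ∧ r2 (Φ, 2) = (Φ, 0)) :
    Nat.card (MulAction.orbitRel.Quotient (↥(Subgroup.closure ({r0, r2} : Set (Equiv.Perm (F × Fin 3))))) (F × Fin 3)) =
      3 * Nat.card (MulAction.orbitRel.Quotient (↥(Subgroup.closure ({s0, s2} : Set (Equiv.Perm F)))) F) := by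
  classical
  -- pointwise facts
  have i0 : ∀ y, s0 (s0 y) = y := fun y => by rw [← Equiv.Perm.mul_apply, hs0i]; rfl
  have i1 : ∀ y, s1 (s1 y) = y := fun y => by rw [← Equiv.Perm.mul_apply, hs1i]; rfl
  have i2 : ∀ y, s2 (s2 y) = y := fun y => by rw [← Equiv.Perm.mul_apply, hs2i]; rfl
  have hc : ∀ y, s2 (s0 y) = s0 (s2 y) := fun y => by
    have := congrArg (fun p : Equiv.Perm F => p y) hcomm
    simpa [Equiv.Perm.mul_apply] using this.symm
  have h02 : ∀ y, s0 (s2 y) ≠ y := fun y => by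
    have := hs02f y; simpa [Equiv.Perm.mul_apply] using this
  have hr00 : ∀ Φ, r0 (Φ, 0) = (s1 Φ, 0) := fun Φ => (hr0 Φ).1
  have hr01 : ∀ Φ, r0 (Φ, 1) = (s0 Φ, 1) := fun Φ => (hr0 Φ).2.1
  have hr02 : ∀ Φ, r0 (Φ, 2) = (s1 Φ, 2) := fun Φ => (hr0 Φ).2.2
  have hr20 : ∀ Φ, r2 (Φ, 0) = (Φ, 2) := fun Φ => (hr2 Φ).1
  have hr21 : ∀ Φ, r2 (Φ, 1) = (s2 Φ, 1) := fun Φ => (hr2 Φ).2.1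
  have hr22 : ∀ Φ, r2 (Φ, 2) = (Φ, 0) := fun Φ => (hr2 Φ).2.2
  have r0inv : ∀ y, r0 (r0 y) = y := by
    rintro ⟨Φ, i⟩; fin_cases i <;> simp [hr00, hr01, hr02, i0, i1]
  have r2inv : ∀ y, r2 (r2 y) = y := by
    rintro ⟨Φ, i⟩; fin_cases i <;> simp [hr20, hr21, hr22, i2]
  -- orbit of x under ⟨s0,s2⟩
  have sorb : ∀ x : F,
      MulAction.orbit (↥(Subgroup.closure ({s0, s2} : Set (Equiv.Perm F)))) x
        = ({x, s0 x, s2 x, s0 (s2 x)} : Set F) := by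
    intro x
    apply orbit_closure_eq'
    · simp
    · intro g hg
      rcases hg with rfl | rfl
      · apply invol_iff' _ i0
        rintro y (rfl | rfl | rfl | rfl) <;> simp [i0]
      · apply invol_iff' _ i2
        rintro y (rfl | rfl | rfl | rfl) <;> simp [i2, hc]
    · rintro y (rfl | rfl | rfl | rfl)
      · exact ⟨1, one_mem _, rfl⟩
      · exact ⟨s0, Subgroup.subset_closure (by simp), rfl⟩
      · exact ⟨s2, Subgroup.subset_closure (by simp), rfl⟩
      · exact ⟨s0 * s2, mul_mem (Subgroup.subset_closure (by simp))
          (Subgroup.subset_closure (by simp)), rfl⟩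
  have scard : ∀ x : F, Nat.card ({x, s0 x, s2 x, s0 (s2 x)} : Set F) = 4 := by
    intro x
    have n1 : x ≠ s0 x := (hs0f x).symm
    have n2 : x ≠ s2 x := (hs2f x).symm
    have n3 : x ≠ s0 (s2 x) := (h02 x).symm
    have n4 : s0 x ≠ s2 x := by
      intro h
      exact h02 x (by rw [← h, i0])
    have n5 : s0 x ≠ s0 (s2 x) := fun h => hs2f x ((Equiv.injective s0 h).symm)
    have n6 : s2 x ≠ s0 (s2 x) := (hs0f (s2 x)).symm
    rw [Nat.card_coe_set_eq,
      Set.ncard_insert_of_notMem (by simp [n1, n2, n3]),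
      Set.ncard_insert_of_notMem (by simp [n4, n5]),
      Set.ncard_pair n6]
  -- orbits for r side
  have rG := Subgroup.closure ({r0, r2} : Set (Equiv.Perm (F × Fin 3)))
  have rorb1 : ∀ Φ : F,
      MulAction.orbit (↥(Subgroup.closure ({r0, r2} : Set (Equiv.Perm (F × Fin 3))))) ((Φ, 1) : F × Fin 3)
        = ({(Φ,1), (s0 Φ,1), (s2 Φ,1), (s0 (s2 Φ),1)} : Set (F × Fin 3)) := by
    intro Φ
    apply orbit_closure_eq'
    · simp
    · intro g hg
      rcases hg with rfl | rfl
      · apply invol_iff' _ r0inv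
        rintro y (rfl | rfl | rfl | rfl) <;> simp [hr01, i0]
      · apply invol_iff' _ r2inv
        rintro y (rfl | rfl | rfl | rfl) <;> simp [hr21, i2, hc]
    · rintro y (rfl | rfl | rfl | rfl)
      · exact ⟨1, one_mem _, rfl⟩
      · exact ⟨r0, Subgroup.subset_closure (by simp), hr01 Φ⟩
      · exact ⟨r2, Subgroup.subset_closure (by simp), hr21 Φ⟩
      · refine ⟨r0 * r2, mul_mem (Subgroup.subset_closure (by simp))
          (Subgroup.subset_closure (by simp)), ?_⟩
        rw [Equiv.Perm.mul_apply, hr21, hr01]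
  have rorb0 : ∀ Φ : F,
      MulAction.orbit (↥(Subgroup.closure ({r0, r2} : Set (Equiv.Perm (F × Fin 3))))) ((Φ, 0) : F × Fin 3)
        = ({(Φ,0), (Φ,2), (s1 Φ,0), (s1 Φ,2)} : Set (F × Fin 3)) := by
    intro Φ
    apply orbit_closure_eq'
    · simp
    · intro g hg
      rcases hg with rfl | rfl
      · apply invol_iff' _ r0inv
        rintro y (rfl | rfl | rfl | rfl) <;> simp [hr00, hr02, i1]
      · apply invol_iff' _ r2inv
        rintro y (rfl | rfl | rfl | rfl) <;> simp [hr20, hr22]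
    · rintro y (rfl | rfl | rfl | rfl)
      · exact ⟨1, one_mem _, rfl⟩
      · exact ⟨r2, Subgroup.subset_closure (by simp), hr20 Φ⟩
      · exact ⟨r0, Subgroup.subset_closure (by simp), hr00 Φ⟩
      · refine ⟨r2 * r0, mul_mem (Subgroup.subset_closure (by simp))
          (Subgroup.subset_closure (by simp)), ?_⟩
        rw [Equiv.Perm.mul_apply, hr00, hr20]
  have rorb2 : ∀ Φ : F,
      MulAction.orbit (↥(Subgroup.closure ({r0, r2} : Set (Equiv.Perm (F × Fin 3))))) ((Φ, 2) : F × Fin 3)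
        = ({(Φ,0), (Φ,2), (s1 Φ,0), (s1 Φ,2)} : Set (F × Fin 3)) := by
    intro Φ
    rw [← rorb0 Φ]
    apply MulAction.orbit_eq_iff.mpr
    exact ⟨⟨r0 * r0 * r2, by
      refine mul_mem (mul_mem ?_ ?_) ?_ <;> exact Subgroup.subset_closure (by simp)⟩, by
      show (r0 * r0 * r2) (Φ, 0) = (Φ, 2)
      rw [Equiv.Perm.mul_apply, Equiv.Perm.mul_apply, hr20, r0inv]⟩
  have r02card : ∀ Φ : F, Nat.card ({(Φ,0), (Φ,2), (s1 Φ,0), (s1 Φ,2)} : Set (F × Fin 3)) = 4 := by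
    intro Φ
    have hne : s1 Φ ≠ Φ := hs1f Φ
    have h02 : ((0 : Fin 3)) ≠ 2 := by decide
    rw [Nat.card_coe_set_eq,
      Set.ncard_insert_of_notMem (by
        simp [Prod.ext_iff, h02, hne.symm]),
      Set.ncard_insert_of_notMem (by
        simp [Prod.ext_iff, h02, hne.symm]),
      Set.ncard_pair (by simp [Prod.ext_iff, h02])]
  have r1card : ∀ Φ : F, Nat.card ({(Φ,1), (s0 Φ,1), (s2 Φ,1), (s0 (s2 Φ),1)} : Set (F × Fin 3)) = 4 := by
    intro Φ
    have n1 : Φ ≠ s0 Φ := (hs0f Φ).symm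
    have n2 : Φ ≠ s2 Φ := (hs2f Φ).symm
    have n3 : Φ ≠ s0 (s2 Φ) := (h02 Φ).symm
    have n4 : s0 Φ ≠ s2 Φ := by
      intro h
      exact h02 Φ (by rw [← h, i0])
    have n5 : s0 Φ ≠ s0 (s2 Φ) := fun h => hs2f Φ ((Equiv.injective s0 h).symm)
    have n6 : s2 Φ ≠ s0 (s2 Φ) := (hs0f (s2 Φ)).symm
    rw [Nat.card_coe_set_eq,
      Set.ncard_insert_of_notMem (by simp [Prod.ext_iff, n1, n2, n3]),
      Set.ncard_insert_of_notMem (by simp [Prod.ext_iff, n4, n5]),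
      Set.ncard_pair (by simp [Prod.ext_iff, n6])]
  -- put it together
  have hs_card : ∀ a : F,
      Nat.card (MulAction.orbit (↥(Subgroup.closure ({s0, s2} : Set (Equiv.Perm F)))) a) = 4 := by
    intro a; rw [sorb a]; exact scard a
  have hr_card : ∀ a : F × Fin 3,
      Nat.card (MulAction.orbit (↥(Subgroup.closure ({r0, r2} : Set (Equiv.Perm (F × Fin 3))))) a) = 4 := by
    rintro ⟨Φ, i⟩
    have g0 : Nat.card (MulAction.orbit (↥(Subgroup.closure ({r0, r2} : Set (Equiv.Perm (F × Fin 3))))) ((Φ, 0) : F × Fin 3)) = 4 := by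
      rw [rorb0 Φ]; exact r02card Φ
    have g1 : Nat.card (MulAction.orbit (↥(Subgroup.closure ({r0, r2} : Set (Equiv.Perm (F × Fin 3))))) ((Φ, 1) : F × Fin 3)) = 4 := by
      rw [rorb1 Φ]; exact r1card Φ
    have g2 : Nat.card (MulAction.orbit (↥(Subgroup.closure ({r0, r2} : Set (Equiv.Perm (F × Fin 3))))) ((Φ, 2) : F × Fin 3)) = 4 := by
      rw [rorb2 Φ]; exact r02card Φ
    fin_cases i
    · exact g0
    · exact g1
    · exact g2
  have e1 := card_eq_four_mul' (↥(Subgroup.closure ({s0, s2} : Set (Equiv.Perm F)))) hs_card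
  have e2 := card_eq_four_mul' (↥(Subgroup.closure ({r0, r2} : Set (Equiv.Perm (F × Fin 3))))) hr_card
  have e3 : Fintype.card (F × Fin 3) = 3 * Fintype.card F := by
    simp [Fintype.card_prod, mul_comm]
  omega
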